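/- Let B be an N×N complex matrix and let ρ be the positive semidefinite matrix on ℂ² ⊗ ℂ^N given in block form by ρ = [[B B†, B],[B†, I_N]] (a 2×N state of rank N in canonical form). Then the partial transpose ρ^{T_A} = [[B B†, B†],[B, I_N]] is positive semidefinite if and only if B is normal (B B† = B† B), and in that case ρ is N-separable. -/

import Mathlib

open Matrix Kronecker BigOperators ComplexConjugate
open scoped ComplexOrder

noncomputable section

/-- The rank-one outer product `u u†`. -/
def outer {ι : Type*} (u : ι → ℂ) : Matrix ι ι ℂ := Matrix.vecMulVec u (star u)

/-- A bipartite state is `K`-separable if it is a sum of exactly `K` Kronecker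
products of rank-one positive operators. -/
def IsKSep (M N K : ℕ) (ρ : Matrix (Fin M × Fin N) (Fin M × Fin N) ℂ) : Prop :=
  ∃ (x : Fin K → Fin M → ℂ) (y : Fin K → Fin N → ℂ),
    ρ = ∑ k : Fin K, (outer (x k)) ⊗ₖ (outer (y k))

/-- A bipartite state is separable if it is `K`-separable for some `K`. -/
def IsSep (M N : ℕ) (ρ : Matrix (Fin M × Fin N) (Fin M × Fin N) ℂ) : Prop :=
  ∃ K : ℕ, IsKSep M N K ρ

/-- The partial transpose with respect to the first (A) factor:
(ρ^{T_A})_{(i,j),(m,n)} = ρ_{(m,j),(i,n)}. -/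
def PTa {M N : ℕ} (ρ : Matrix (Fin M × Fin N) (Fin M × Fin N) ℂ) :
    Matrix (Fin M × Fin N) (Fin M × Fin N) ℂ :=
  Matrix.of fun p q => ρ (q.1, p.2) (p.1, q.2)

/-- Identification of `Fin 2 × Fin N` with `Fin N ⊕ Fin N`, used to write a
2×N state in 2×2 block form with N×N blocks. -/
def blockIdx (N : ℕ) : Fin 2 × Fin N → Fin N ⊕ Fin N :=
  fun p => if p.1 = 0 then Sum.inl p.2 else Sum.inr p.2

/-- `blockIdx` as an equivalence. -/
def blockEquiv (N : ℕ) : (Fin 2 × Fin N) ≃ (Fin N ⊕ Fin N) where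
  toFun := blockIdx N
  invFun := Sum.elim (fun j => ((0 : Fin 2), j)) (fun j => ((1 : Fin 2), j))
  left_inv := by
    rintro ⟨a, j⟩
    fin_cases a <;> simp [blockIdx]
  right_inv := by
    rintro (j | j) <;> simp [blockIdx]

/-- A PSD matrix with zero trace is zero. -/
lemma psd_trace_zero {n : ℕ} {D : Matrix (Fin n) (Fin n) ℂ} (hD : D.PosSemidef)
    (h : D.trace = 0) : D = 0 := by
  obtain ⟨C, rfl⟩ : ∃ C : Matrix (Fin n) (Fin n) ℂ, D = Cᴴ * C := by
    open scoped MatrixOrder in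
    have h0 : (0 : Matrix (Fin n) (Fin n) ℂ) ≤ D := Matrix.nonneg_iff_posSemidef.mpr hD
    open scoped MatrixOrder in
    refine ⟨CFC.sqrt D, ?_⟩
    open scoped MatrixOrder in
    have hsa : (CFC.sqrt D)ᴴ = CFC.sqrt D := (CFC.sqrt_nonneg D).isSelfAdjoint
    open scoped MatrixOrder in
    rw [hsa, CFC.sqrt_mul_sqrt_self D h0]
  have ht : ∑ j, ∑ k, Complex.normSq (C k j) = 0 := by
    have h2 : (Cᴴ * C).trace = ((∑ j, ∑ k, Complex.normSq (C k j) : ℝ) : ℂ) := by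
      push_cast
      simp only [Matrix.trace, Matrix.diag, Matrix.mul_apply, Matrix.conjTranspose_apply]
      refine Finset.sum_congr rfl fun j _ => Finset.sum_congr rfl fun k _ => ?_
      rw [Complex.star_def, Complex.normSq_eq_conj_mul_self]
    rw [h] at h2
    exact_mod_cast h2.symm
  have hC : ∀ k j, C k j = 0 := by
    intro k j
    have h1 : ∀ j ∈ Finset.univ, (0:ℝ) ≤ ∑ k, Complex.normSq (C k j) :=
      fun j _ => Finset.sum_nonneg fun k _ => Complex.normSq_nonneg _
    have h3 := (Finset.sum_eq_zero_iff_of_nonneg h1).mp ht j (Finset.mem_univ j)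
    have h4 := (Finset.sum_eq_zero_iff_of_nonneg
      (fun k _ => Complex.normSq_nonneg (C k j))).mp h3 k (Finset.mem_univ k)
    exact Complex.normSq_eq_zero.mp h4
  ext i j
  simp [Matrix.mul_apply, hC]

set_option maxHeartbeats 1000000

lemma toEuclideanLin_mul {N : ℕ} (X Y : Matrix (Fin N) (Fin N) ℂ) :
    Matrix.toEuclideanLin (X * Y) = Matrix.toEuclideanLin X ∘ₗ Matrix.toEuclideanLin Y := by
  apply LinearMap.ext
  intro x
  simp [Matrix.toEuclideanLin_apply, Matrix.mulVec_mulVec]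

lemma normal_spectral {N : ℕ} {B : Matrix (Fin N) (Fin N) ℂ} (hB : B * Bᴴ = Bᴴ * B) :
    ∃ (U : Matrix (Fin N) (Fin N) ℂ) (lam : Fin N → ℂ),
      U * Uᴴ = 1 ∧ B = U * Matrix.diagonal lam * Uᴴ := by
  classical
  set H : Matrix (Fin N) (Fin N) ℂ := B + Bᴴ with hHdef
  set K : Matrix (Fin N) (Fin N) ℂ := Complex.I • (Bᴴ - B) with hKdef
  have hH : H.IsHermitian := by
    simp [Matrix.IsHermitian, hHdef, Matrix.conjTranspose_add, add_comm]
  have hK : K.IsHermitian := by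
    simp only [Matrix.IsHermitian, hKdef, Matrix.conjTranspose_smul,
      Matrix.conjTranspose_sub, Matrix.conjTranspose_conjTranspose]
    rw [show star Complex.I = -Complex.I from by simp]
    rw [neg_smul, ← smul_neg, neg_sub]
  have hHK : H * K = K * H := by
    simp only [hHdef, hKdef, Matrix.mul_smul, Matrix.smul_mul]
    congr 1
    simp only [Matrix.add_mul, Matrix.mul_add, Matrix.mul_sub, Matrix.sub_mul]
    rw [hB]
    abel
  have hA₁ : (Matrix.toEuclideanLin H).IsSymmetric :=
    (Matrix.isHermitian_iff_isSymmetric).mp hH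
  have hA₂ : (Matrix.toEuclideanLin K).IsSymmetric :=
    (Matrix.isHermitian_iff_isSymmetric).mp hK
  have hcomm : Commute (Matrix.toEuclideanLin H) (Matrix.toEuclideanLin K) := by
    unfold Commute SemiconjBy
    rw [Module.End.mul_eq_comp, Module.End.mul_eq_comp, ← toEuclideanLin_mul, ← toEuclideanLin_mul,
      hHK]
  have hint := LinearMap.IsSymmetric.directSum_isInternal_of_commute hA₁ hA₂ hcomm
  have hOF := LinearMap.IsSymmetric.orthogonalFamily_eigenspace_inf_eigenspace hA₁ hA₂
  haveI := hint.submodule_iSupIndep.fintypeNeBotOfFiniteDimensional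
  have hint' := DirectSum.isInternal_ne_bot_iff.mpr hint
  have hOF' := hOF.comp (Subtype.val_injective
    (p := fun i : ℂ × ℂ => (Module.End.eigenspace (Matrix.toEuclideanLin H) i.2 ⊓
      Module.End.eigenspace (Matrix.toEuclideanLin K) i.1) ≠ ⊥))
  have hn : Module.finrank ℂ (EuclideanSpace ℂ (Fin N)) = N := by
    simp [finrank_euclideanSpace]
  let b := hint'.subordinateOrthonormalBasis hn hOF'
  let ix := fun a => hint'.subordinateOrthonormalBasisIndex hn a hOF'
  let μν : Fin N → ℂ × ℂ := fun a => (ix a : ℂ × ℂ)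
  have hmem : ∀ a, b a ∈ (Module.End.eigenspace (Matrix.toEuclideanLin H) (μν a).2 ⊓
      Module.End.eigenspace (Matrix.toEuclideanLin K) (μν a).1) := fun a =>
    hint'.subordinateOrthonormalBasis_subordinate hn a hOF'
  set v : Fin N → Fin N → ℂ := fun k => (WithLp.equiv 2 (Fin N → ℂ)) (b k) with hv
  have hHv : ∀ k, H *ᵥ v k = (μν k).2 • v k := by
    intro k
    have h1 : Matrix.toEuclideanLin H (b k) = (μν k).2 • b k :=
      Module.End.mem_eigenspace_iff.mp (hmem k).1
    have := congrArg (WithLp.equiv 2 (Fin N → ℂ)) h1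
    exact this
  have hKv : ∀ k, K *ᵥ v k = (μν k).1 • v k := by
    intro k
    have h1 : Matrix.toEuclideanLin K (b k) = (μν k).1 • b k :=
      Module.End.mem_eigenspace_iff.mp (hmem k).2
    have := congrArg (WithLp.equiv 2 (Fin N → ℂ)) h1
    exact this
  have hBdecomp : (2:ℂ)⁻¹ • (H + Complex.I • K) = B := by
    simp only [hHdef, hKdef, smul_smul]
    rw [show Complex.I * Complex.I = -1 from Complex.I_mul_I]
    module
  set lam : Fin N → ℂ := fun k => (2:ℂ)⁻¹ * ((μν k).2 + Complex.I * (μν k).1) with hlam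
  have hBv : ∀ k, B *ᵥ v k = lam k • v k := by
    intro k
    rw [← hBdecomp]
    rw [Matrix.smul_mulVec, Matrix.add_mulVec, Matrix.smul_mulVec, hHv, hKv]
    simp only [hlam, smul_smul]
    module
  have horth : ∀ k l, (∑ i, (starRingEnd ℂ) (v k i) * v l i) = if k = l then 1 else 0 := by
    intro k l
    have := (orthonormal_iff_ite).mp b.orthonormal k l
    rw [← this, PiLp.inner_apply]
    simp only [RCLike.inner_apply']
    rfl
  set U : Matrix (Fin N) (Fin N) ℂ := Matrix.of (fun i k => v k i) with hU
  have hUU : Uᴴ * U = 1 := by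
    ext k l
    simp only [Matrix.mul_apply, Matrix.conjTranspose_apply, hU, Matrix.of_apply,
      Matrix.one_apply, RCLike.star_def]
    rw [horth k l]
  have hUU' : U * Uᴴ = 1 := mul_eq_one_comm.mp hUU
  have hBU : B * U = U * Matrix.diagonal lam := by
    ext i k
    rw [Matrix.mul_diagonal]
    have h2 := congrFun (hBv k) i
    simp only [Matrix.mulVec, dotProduct, Pi.smul_apply, smul_eq_mul] at h2
    simp only [Matrix.mul_apply, hU, Matrix.of_apply]
    rw [h2]
    ring
  refine ⟨U, lam, hUU', ?_⟩
  calc B = B * (U * Uᴴ) := by rw [hUU', Matrix.mul_one]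
  _ = (B * U) * Uᴴ := by rw [Matrix.mul_assoc]
  _ = U * Matrix.diagonal lam * Uᴴ := by rw [hBU]

/-- For a rank-N canonical-form 2×N state ρ = [[BB†,B],[B†,I]], the partial
transpose ρ^{T_A} = [[BB†,B†],[B,I]] is positive semidefinite iff B is normal,
and in that case ρ is N-separable. -/
theorem rankN_ppt_iff_normal_and_separable (N : ℕ)
    (B : Matrix (Fin N) (Fin N) ℂ)
    (ρ : Matrix (Fin 2 × Fin N) (Fin 2 × Fin N) ℂ)
    (hρ : ρ = (Matrix.fromBlocks (B * Bᴴ) B Bᴴ (1 : Matrix (Fin N) (Fin N) ℂ)).submatrix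
      (blockIdx N) (blockIdx N)) :
    PTa ρ = (Matrix.fromBlocks (B * Bᴴ) Bᴴ B (1 : Matrix (Fin N) (Fin N) ℂ)).submatrix
      (blockIdx N) (blockIdx N) ∧
    ((PTa ρ).PosSemidef ↔ B * Bᴴ = Bᴴ * B) ∧
    (B * Bᴴ = Bᴴ * B → IsKSep 2 N N ρ) := by
  subst hρ
  have hPT : PTa ((Matrix.fromBlocks (B * Bᴴ) B Bᴴ (1 : Matrix (Fin N) (Fin N) ℂ)).submatrix
      (blockIdx N) (blockIdx N)) =
      (Matrix.fromBlocks (B * Bᴴ) Bᴴ B (1 : Matrix (Fin N) (Fin N) ℂ)).submatrix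
      (blockIdx N) (blockIdx N) := by
    ext ⟨a, i⟩ ⟨c, j⟩
    fin_cases a <;> fin_cases c <;>
      simp [PTa, blockIdx, Matrix.submatrix_apply]
  refine ⟨hPT, ?_, ?_⟩
  · -- PSD iff normal
    rw [hPT]
    have hsub : (Matrix.fromBlocks (B * Bᴴ) Bᴴ B (1 : Matrix (Fin N) (Fin N) ℂ)).submatrix
        (blockIdx N) (blockIdx N) =
        (Matrix.fromBlocks (B * Bᴴ) Bᴴ B (1 : Matrix (Fin N) (Fin N) ℂ)).submatrix
        (blockEquiv N) (blockEquiv N) := rfl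
    rw [hsub, Matrix.posSemidef_submatrix_equiv]
    constructor
    · intro hM
      have hq : ∀ u : Fin N → ℂ, 0 ≤ star u ⬝ᵥ ((B * Bᴴ - Bᴴ * B) *ᵥ u) := by
        intro u
        have h2 := hM.dotProduct_mulVec_nonneg (Sum.elim u (-(B *ᵥ u)))
        have he : (Matrix.fromBlocks (B * Bᴴ) Bᴴ B (1 : Matrix (Fin N) (Fin N) ℂ)) *ᵥ
            Sum.elim u (-(B *ᵥ u)) =
            Sum.elim ((B * Bᴴ) *ᵥ u - (Bᴴ * B) *ᵥ u) 0 := by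
          rw [Matrix.fromBlocks_mulVec]
          congr 1 <;>
            simp [Matrix.mulVec_neg, Matrix.mulVec_mulVec, sub_eq_add_neg]
        have hst : star (Sum.elim u (-(B *ᵥ u))) =
            Sum.elim (star u) (star (-(B *ᵥ u))) := by
          funext x; cases x <;> rfl
        rw [he, hst, sumElim_dotProduct_sumElim, dotProduct_zero, add_zero] at h2
        simpa [Matrix.sub_mulVec] using h2
      have hherm : (B * Bᴴ - Bᴴ * B).IsHermitian := by
        simp [Matrix.IsHermitian, Matrix.conjTranspose_sub, Matrix.conjTranspose_mul]
      have hzero : B * Bᴴ - Bᴴ * B = 0 := by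
        apply psd_trace_zero (Matrix.PosSemidef.of_dotProduct_mulVec_nonneg hherm hq)
        rw [Matrix.trace_sub, Matrix.trace_mul_comm]
        ring
      exact sub_eq_zero.mp hzero
    · intro hB
      have hkey : (Matrix.fromCols B (1 : Matrix (Fin N) (Fin N) ℂ))ᴴ *
          (Matrix.fromCols B (1 : Matrix (Fin N) (Fin N) ℂ)) =
          Matrix.fromBlocks (B * Bᴴ) Bᴴ B (1 : Matrix (Fin N) (Fin N) ℂ) := by
        rw [Matrix.conjTranspose_fromCols_eq_fromRows_conjTranspose,
          Matrix.fromRows_mul_fromCols]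
        rw [hB]
        simp
      rw [← hkey]
      exact Matrix.posSemidef_conjTranspose_mul_self _
  · -- separability
    intro hB
    obtain ⟨U, lam, hUU', hBspec⟩ := normal_spectral hB
    have hUU : Uᴴ * U = 1 := mul_eq_one_comm.mp hUU'
    have hG : ∀ (w : Fin N → ℂ) (i j : Fin N),
        ∑ k, w k * (U i k * star (U j k)) = (U * Matrix.diagonal w * Uᴴ) i j := by
      intro w i j
      rw [Matrix.mul_apply]
      refine Finset.sum_congr rfl fun k _ => ?_
      rw [Matrix.mul_diagonal, Matrix.conjTranspose_apply]
      ring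
    have hBH : Bᴴ = U * Matrix.diagonal (star lam) * Uᴴ := by
      rw [hBspec]
      simp only [Matrix.conjTranspose_mul, Matrix.conjTranspose_conjTranspose,
        Matrix.diagonal_conjTranspose]
      rw [Matrix.mul_assoc]
    have hBBH : B * Bᴴ = U * Matrix.diagonal (fun k => lam k * star (lam k)) * Uᴴ := by
      rw [hBH, hBspec]
      simp only [Matrix.mul_assoc]
      rw [← Matrix.mul_assoc Uᴴ U, hUU, Matrix.one_mul,
        ← Matrix.mul_assoc (Matrix.diagonal lam) (Matrix.diagonal (star lam)),
        Matrix.diagonal_mul_diagonal]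
      rfl
    have h1M : (1 : Matrix (Fin N) (Fin N) ℂ) =
        U * Matrix.diagonal (fun _ => (1:ℂ)) * Uᴴ := by
      rw [show Matrix.diagonal (fun _ => (1:ℂ)) = (1 : Matrix (Fin N) (Fin N) ℂ) from
        Matrix.diagonal_one, Matrix.mul_one, hUU']
    have e00 : ∀ i j : Fin N, (B * Bᴴ) i j =
        ∑ k, (![lam k, 1] 0 * star (![lam k, 1] 0)) * (U i k * star (U j k)) := by
      intro i j
      rw [hBBH, ← hG]
      exact Finset.sum_congr rfl fun k _ => by simp
    have e01 : ∀ i j : Fin N, B i j =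
        ∑ k, (![lam k, 1] 0 * star (![lam k, 1] 1)) * (U i k * star (U j k)) := by
      intro i j
      rw [hBspec, ← hG]
      exact Finset.sum_congr rfl fun k _ => by simp
    have e10 : ∀ i j : Fin N, Bᴴ i j =
        ∑ k, (![lam k, 1] 1 * star (![lam k, 1] 0)) * (U i k * star (U j k)) := by
      intro i j
      rw [hBH, ← hG]
      exact Finset.sum_congr rfl fun k _ => by simp [Pi.star_apply, mul_comm]
    have e11 : ∀ i j : Fin N, (1 : Matrix (Fin N) (Fin N) ℂ) i j =
        ∑ k, (![lam k, 1] 1 * star (![lam k, 1] 1)) * (U i k * star (U j k)) := by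
      intro i j
      rw [h1M, ← hG]
      exact Finset.sum_congr rfl fun k _ => by simp
    have hL : ∀ (a : Fin 2) (i : Fin N) (c : Fin 2) (j : Fin N),
        (Matrix.fromBlocks (B * Bᴴ) B Bᴴ (1 : Matrix (Fin N) (Fin N) ℂ)).submatrix
          (blockIdx N) (blockIdx N) (a, i) (c, j) =
        ∑ k, (![lam k, 1] a * star (![lam k, 1] c)) * (U i k * star (U j k)) := by
      intro a i c j
      fin_cases a <;> fin_cases c <;>
        simp only [Matrix.submatrix_apply, blockIdx, Fin.isValue, if_true, if_false,
          reduceIte, Matrix.fromBlocks_apply₁₁, Matrix.fromBlocks_apply₁₂,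
          Matrix.fromBlocks_apply₂₁, Matrix.fromBlocks_apply₂₂]
      · exact e00 i j
      · exact e01 i j
      · exact e10 i j
      · exact e11 i j
    refine ⟨fun k => ![lam k, 1], fun k i => U i k, ?_⟩
    ext ⟨a, i⟩ ⟨c, j⟩
    rw [Matrix.sum_apply, hL]
    refine Finset.sum_congr rfl fun k _ => ?_
    simp only [Matrix.kroneckerMap_apply, outer, Matrix.vecMulVec_apply, Pi.star_apply]
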